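/- arXiv:2605.13284 — 2 statements merged into one kernel-verified Lean document; each statement's English description precedes it below -/
import Mathlib

section
/- Let J : ℝ^d → ℝ be twice differentiable, let Γ* ⊆ ℝ^d be a nonempty convex set such that ∇J(γ) = 0 for every γ ∈ Γ*, and let Q be a d × r real matrix with Qᵀ Q = I_r such that, for every γ* ∈ Γ*, the r × r matrix H*(γ*) := Qᵀ (∇²J(γ*)) Q is negative definite and the commutation identity Qᵀ (∇²J(γ*)) = H*(γ*) Qᵀ holds. Then the set {Qᵀ γ* : γ* ∈ Γ*} is a singleton; that is, Qᵀ γ₁ = Qᵀ γ₂ for all γ₁, γ₂ ∈ Γ*. -/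
open Matrix

/-- Lemma A.1(i) of the paper.
Let `J : ℝ^d → ℝ` be twice differentiable (with gradient `G` and Hessian matrix `H`),
let `Γ*` be a nonempty convex set on which the gradient of `J` vanishes, and let `Q` be a
`d × r` matrix with `Qᵀ Q = I` such that for every `γ* ∈ Γ*` the matrix
`H*(γ*) = Qᵀ H(γ*) Q` is negative definite and `Qᵀ H(γ*) = H*(γ*) Qᵀ`.
Then `{Qᵀ γ* : γ* ∈ Γ*}` is a singleton. -/
theorem stmt0 {d r : ℕ}
    (J : EuclideanSpace ℝ (Fin d) → ℝ)
    (G : EuclideanSpace ℝ (Fin d) → EuclideanSpace ℝ (Fin d))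
    (H : EuclideanSpace ℝ (Fin d) → Matrix (Fin d) (Fin d) ℝ)
    (hgrad : ∀ γ, HasGradientAt J (G γ) γ)
    (hhess : ∀ γ, HasFDerivAt G
      ((Matrix.toEuclideanLin (H γ)).toContinuousLinearMap) γ)
    (Γstar : Set (EuclideanSpace ℝ (Fin d)))
    (hne : Γstar.Nonempty) (hconv : Convex ℝ Γstar)
    (hstat : ∀ γ ∈ Γstar, G γ = 0)
    (Q : Matrix (Fin d) (Fin r) ℝ)
    (hQ : Qᵀ * Q = 1)
    (hnegdef : ∀ γ ∈ Γstar, ∀ u : Fin r → ℝ, u ≠ 0 →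
      u ⬝ᵥ (Qᵀ * H γ * Q).mulVec u < 0)
    (hcomm : ∀ γ ∈ Γstar, Qᵀ * H γ = (Qᵀ * H γ * Q) * Qᵀ) :
    ∀ γ₁ ∈ Γstar, ∀ γ₂ ∈ Γstar, Qᵀ.mulVec γ₁ = Qᵀ.mulVec γ₂ := by
  intro γ₁ h₁ γ₂ h₂
  set v : EuclideanSpace ℝ (Fin d) := γ₂ - γ₁ with hv
  -- the curve c t = γ₁ + t • v
  set c : ℝ → EuclideanSpace ℝ (Fin d) := fun t => γ₁ + t • v with hc
  have hcmem : ∀ t ∈ Set.Icc (0:ℝ) 1, c t ∈ Γstar := by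
    intro t ht
    have : (1 - t) • γ₁ + t • γ₂ ∈ Γstar :=
      hconv h₁ h₂ (by linarith [ht.2]) ht.1 (by ring)
    convert this using 1
    simp only [hc, hv]
    module
  have hderiv : HasDerivAt c v 0 := by
    have h1 : HasDerivAt (fun t : ℝ => t • v) ((1:ℝ) • v) 0 :=
      (hasDerivAt_id (0:ℝ)).smul_const v
    simpa only [one_smul] using h1.const_add γ₁
  have hcomp : HasDerivAt (fun t => G (c t))
      ((Matrix.toEuclideanLin (H γ₁)).toContinuousLinearMap v) 0 := by
    have h0 : c 0 = γ₁ := by simp [hc]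
    have hh : HasFDerivAt G
        ((Matrix.toEuclideanLin (H γ₁)).toContinuousLinearMap) (c 0) := by
      rw [h0]; exact hhess γ₁
    exact hh.comp_hasDerivAt 0 hderiv
  have hzero : ∀ t ∈ Set.Icc (0:ℝ) 1, G (c t) = 0 := fun t ht =>
    hstat _ (hcmem t ht)
  have hu : UniqueDiffWithinAt ℝ (Set.Icc (0:ℝ) 1) 0 :=
    (uniqueDiffOn_Icc (by norm_num)) 0 (by norm_num)
  have hd1 : HasDerivWithinAt (fun t => G (c t))
      ((Matrix.toEuclideanLin (H γ₁)).toContinuousLinearMap v) (Set.Icc 0 1) 0 :=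
    hcomp.hasDerivWithinAt
  have hd2 : HasDerivWithinAt (fun t => G (c t)) 0 (Set.Icc (0:ℝ) 1) 0 := by
    have : HasDerivWithinAt (fun _ : ℝ => (0 : EuclideanSpace ℝ (Fin d))) 0
        (Set.Icc (0:ℝ) 1) 0 := (hasDerivWithinAt_const _ _ _)
    exact this.congr hzero (hzero 0 (by norm_num))
  have hkey : (Matrix.toEuclideanLin (H γ₁)).toContinuousLinearMap v = 0 := by
    rw [← hd1.derivWithin hu, hd2.derivWithin hu]
  -- translate to mulVec
  have hmul : (H γ₁).mulVec v = 0 := by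
    have : Matrix.toEuclideanLin (H γ₁) v = 0 := hkey
    funext i
    have := congrFun (congrArg (WithLp.equiv 2 (Fin d → ℝ)) this) i
    simpa [Matrix.toEuclideanLin_apply] using this
  have hw : (Qᵀ * H γ₁ * Q).mulVec (Qᵀ.mulVec v) = 0 := by
    have h1 : (Qᵀ * H γ₁).mulVec v = 0 := by
      rw [← Matrix.mulVec_mulVec, hmul, Matrix.mulVec_zero]
    rw [Matrix.mulVec_mulVec, ← hcomm γ₁ h₁]; exact h1
  by_contra hne'
  have hwne : Qᵀ.mulVec v ≠ 0 := by
    intro h0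
    apply hne'
    have : Qᵀ.mulVec v = Qᵀ.mulVec γ₂ - Qᵀ.mulVec γ₁ := by
      simp only [hv]
      exact Matrix.mulVec_sub _ _ _
    rw [this] at h0
    exact (sub_eq_zero.mp h0).symm
  have := hnegdef γ₁ h₁ (Qᵀ.mulVec v) hwne
  rw [hw] at this
  simp at this
end

section
/- Let Γ ⊆ ℝ^d be compact, let (𝒳, 𝒜) be a measurable space, and let ψ : Γ × 𝒳 → ℝ^d satisfy: ψ(·, x) is continuous on Γ for every x ∈ 𝒳; ψ(γ, ·) is measurable for every γ ∈ Γ; and E[sup_{γ ∈ Γ} ‖ψ(γ, X)‖] < ∞, where X, X₁, X₂, … are i.i.d. 𝒳-valued random variables on a probability space (Ω, ℱ, P). Let Γ* := {γ ∈ Γ : E[ψ(γ, X)] = 0} and assume Γ* is nonempty. Let (γ̂_n) be any sequence of Γ-valued random vectors such that ‖Ψ_n(γ̂_n)‖ → 0 in probability, where Ψ_n(γ) = n⁻¹ ∑_{i=1}^n ψ(γ, X_i). Then the distance d(γ̂_n, Γ*) := inf_{γ* ∈ Γ*} ‖γ̂_n − γ*‖ converges to 0 in probability as n → ∞. -/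
open MeasureTheory ProbabilityTheory Filter Topology

lemma osc_exists {d : ℕ} {𝒳 : Type*} [MeasurableSpace 𝒳]
    (Γs : Set (EuclideanSpace ℝ (Fin d)))
    (ψ : EuclideanSpace ℝ (Fin d) → 𝒳 → EuclideanSpace ℝ (Fin d))
    (hcont : ∀ x, ContinuousOn (fun γ => ψ γ x) Γs)
    (hmeas : ∀ γ, Measurable (ψ γ))
    (M : 𝒳 → ℝ) (hdom : ∀ γ ∈ Γs, ∀ x, ‖ψ γ x‖ ≤ M x)
    (γ₀ : EuclideanSpace ℝ (Fin d)) (hγ₀ : γ₀ ∈ Γs) (r : ℝ) (hr : 0 < r) :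
    ∃ D : 𝒳 → ℝ, Measurable D ∧ (∀ x, 0 ≤ D x) ∧ (∀ x, D x ≤ 2 * M x) ∧
      (∀ γ ∈ Metric.closedBall γ₀ r ∩ Γs, ∀ x, ‖ψ γ x - ψ γ₀ x‖ ≤ D x) ∧
      (∀ x η, (∀ γ ∈ Metric.closedBall γ₀ r ∩ Γs, ‖ψ γ x - ψ γ₀ x‖ ≤ η) → D x ≤ η) := by
  set S : Set (EuclideanSpace ℝ (Fin d)) := Metric.closedBall γ₀ r ∩ Γs with hS
  have hγ₀S : γ₀ ∈ S := ⟨Metric.mem_closedBall_self hr.le, hγ₀⟩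
  have hSΓ : S ⊆ Γs := Set.inter_subset_right
  obtain ⟨t, htc, hts, hstc⟩ : ∃ t, t.Countable ∧ t ⊆ S ∧ S ⊆ closure t := by
    have : TopologicalSpace.IsSeparable S :=
      TopologicalSpace.IsSeparable.of_separableSpace S
    obtain ⟨c, hcsub, hcc, hcd⟩ :=
      TopologicalSpace.IsSeparable.exists_countable_dense_subset this
    exact ⟨c, hcc, hcsub, hcd⟩
  have htne : t.Nonempty := by
    rcases t.eq_empty_or_nonempty with h | h
    · exfalso; rw [h] at hstc; simpa using hstc hγ₀S
    · exact h
  haveI : Countable t := htc.to_subtype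
  haveI : Nonempty t := htne.to_subtype
  set D : 𝒳 → ℝ := fun x => ⨆ γ : t, ‖ψ (γ : EuclideanSpace ℝ (Fin d)) x - ψ γ₀ x‖ with hD
  have hbdd : ∀ x, BddAbove (Set.range fun γ : t => ‖ψ (γ : EuclideanSpace ℝ (Fin d)) x - ψ γ₀ x‖) := by
    intro x
    refine ⟨2 * M x, ?_⟩
    rintro y ⟨γ, rfl⟩
    calc ‖ψ (γ : EuclideanSpace ℝ (Fin d)) x - ψ γ₀ x‖
        ≤ ‖ψ (γ : EuclideanSpace ℝ (Fin d)) x‖ + ‖ψ γ₀ x‖ := norm_sub_le _ _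
      _ ≤ M x + M x := add_le_add (hdom _ (hSΓ (hts γ.2)) x) (hdom _ hγ₀ x)
      _ = 2 * M x := by ring
  have hub : ∀ γ ∈ S, ∀ x, ‖ψ γ x - ψ γ₀ x‖ ≤ D x := by
    intro γ hγ x
    have hcl : γ ∈ closure t := hstc hγ
    haveI : (nhdsWithin γ t).NeBot := mem_closure_iff_nhdsWithin_neBot.mp hcl
    have hcw : ContinuousWithinAt (fun γ' => ‖ψ γ' x - ψ γ₀ x‖) t γ := by
      have : ContinuousWithinAt (fun γ' => ‖ψ γ' x - ψ γ₀ x‖) Γs γ :=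
        (((hcont x γ (hSΓ hγ)).sub continuousWithinAt_const).norm)
      exact this.mono (hts.trans hSΓ)
    refine le_of_tendsto hcw ?_
    filter_upwards [self_mem_nhdsWithin] with γ' hγ'
    exact le_ciSup (hbdd x) ⟨γ', hγ'⟩
  refine ⟨D, ?_, ?_, ?_, hub, ?_⟩
  · exact Measurable.iSup fun γ => ((hmeas _).sub (hmeas γ₀)).norm
  · intro x
    have := hub γ₀ hγ₀S x
    simpa using this
  · intro x
    refine ciSup_le fun γ => ?_
    calc ‖ψ (γ : EuclideanSpace ℝ (Fin d)) x - ψ γ₀ x‖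
        ≤ ‖ψ (γ : EuclideanSpace ℝ (Fin d)) x‖ + ‖ψ γ₀ x‖ := norm_sub_le _ _
      _ ≤ M x + M x := add_le_add (hdom _ (hSΓ (hts γ.2)) x) (hdom _ hγ₀ x)
      _ = 2 * M x := by ring
  · intro x η hη
    exact ciSup_le fun γ => hη _ (hts γ.2)

/-- Theorem 1 of the paper: asymptotic consistency without unique
identifiability. Let `Γ* = {γ ∈ Γ : E[ψ(γ, X)] = 0}` be nonempty. Any sequence `γ̂_n` of
`Γ`-valued random vectors with `‖Ψ_n(γ̂_n)‖ → 0` in probability satisfies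
`d(γ̂_n, Γ*) → 0` in probability. -/
theorem stmt7 {d : ℕ} {𝒳 : Type*} [MeasurableSpace 𝒳]
    {Ω : Type*} [MeasurableSpace Ω] (P : Measure Ω) [IsProbabilityMeasure P]
    (Γs : Set (EuclideanSpace ℝ (Fin d))) (hΓ : IsCompact Γs)
    (ψ : EuclideanSpace ℝ (Fin d) → 𝒳 → EuclideanSpace ℝ (Fin d))
    (hcont : ∀ x, ContinuousOn (fun γ => ψ γ x) Γs)
    (hmeas : ∀ γ, Measurable (ψ γ))
    (X : ℕ → Ω → 𝒳) (hXmeas : ∀ i, Measurable (X i))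
    (hindep : iIndepFun X P)
    (hident : ∀ i, IdentDistrib (X i) (X 0) P P)
    (M : 𝒳 → ℝ) (hMint : Integrable (fun ω => M (X 0 ω)) P)
    (hdom : ∀ γ ∈ Γs, ∀ x, ‖ψ γ x‖ ≤ M x)
    (Γstar : Set (EuclideanSpace ℝ (Fin d)))
    (hΓstar : Γstar = {γ ∈ Γs | (∫ ω, ψ γ (X 0 ω) ∂P) = 0})
    (hΓstarne : Γstar.Nonempty)
    (γhat : ℕ → Ω → EuclideanSpace ℝ (Fin d))
    (hγhatmeas : ∀ n, Measurable (γhat n))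
    (hγhatmem : ∀ n ω, γhat n ω ∈ Γs)
    (happrox : ∀ ε > 0, Tendsto (fun n : ℕ =>
      P {ω | ε ≤ ‖((n : ℝ))⁻¹ • (∑ i ∈ Finset.range n, ψ (γhat n ω) (X i ω))‖})
      atTop (nhds 0)) :
    ∀ ε > 0, Tendsto (fun n : ℕ =>
      P {ω | ε ≤ Metric.infDist (γhat n ω) Γstar}) atTop (nhds 0) := by
  intro ε hε
  -- basic integrability
  have hψint : ∀ γ ∈ Γs, Integrable (fun ω => ψ γ (X 0 ω)) P := by
    intro γ hγ
    refine hMint.mono' (((hmeas γ).comp (hXmeas 0)).aestronglyMeasurable) ?_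
    exact Filter.Eventually.of_forall fun ω => hdom γ hγ _
  set g : EuclideanSpace ℝ (Fin d) → EuclideanSpace ℝ (Fin d) :=
    fun γ => ∫ ω, ψ γ (X 0 ω) ∂P with hg
  have hgcont : ContinuousOn g Γs := by
    refine continuousOn_of_dominated (bound := fun ω => M (X 0 ω)) ?_ ?_ hMint ?_
    · exact fun γ hγ => ((hmeas γ).comp (hXmeas 0)).aestronglyMeasurable
    · exact fun γ hγ => Filter.Eventually.of_forall fun ω => hdom γ hγ _
    · exact Filter.Eventually.of_forall fun ω => (hcont (X 0 ω)).comp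
        (continuousOn_id) (fun γ hγ => hγ)
  -- the "bad" compact set
  set K : Set (EuclideanSpace ℝ (Fin d)) :=
    Γs ∩ {γ | ε ≤ Metric.infDist γ Γstar} with hKdef
  have hKcomp : IsCompact K :=
    hΓ.inter_right (isClosed_le continuous_const (Metric.continuous_infDist_pt Γstar))
  have hmemK : ∀ n ω, ε ≤ Metric.infDist (γhat n ω) Γstar → γhat n ω ∈ K :=
    fun n ω h => ⟨hγhatmem n ω, h⟩
  rcases K.eq_empty_or_nonempty with hKe | hKne
  · have : ∀ n, P {ω | ε ≤ Metric.infDist (γhat n ω) Γstar} = 0 := by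
      intro n
      have : {ω | ε ≤ Metric.infDist (γhat n ω) Γstar} = ∅ := by
        ext ω
        simp only [Set.mem_setOf_eq, Set.mem_empty_iff_false, iff_false]
        intro h
        exact absurd (hmemK n ω h) (by simp [hKe])
      simp [this]
    simpa [this] using tendsto_const_nhds (α := ENNReal) (f := atTop (α := ℕ))
  -- positive minimum of ‖g‖ on K
  obtain ⟨γm, hγmK, hγmmin⟩ :=
    hKcomp.exists_isMinOn hKne ((hgcont.mono Set.inter_subset_left).norm)
  set δ : ℝ := ‖g γm‖ with hδdef
  have hδpos : 0 < δ := by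
    have hne : g γm ≠ 0 := by
      intro h0
      have hγmΓ : γm ∈ Γstar := by
        rw [hΓstar]
        exact ⟨hγmK.1, h0⟩
      have : Metric.infDist γm Γstar = 0 := Metric.infDist_zero_of_mem hγmΓ
      have := hγmK.2
      simp only [Set.mem_setOf_eq] at this
      linarith
    exact norm_pos_iff.mpr hne
  have h8 : (0:ℝ) < δ/8 := by linarith
  have h2 : (0:ℝ) < δ/2 := by linarith
  -- choose local oscillation functions with small expectation
  have hosc : ∀ γ₀, γ₀ ∈ Γs → ∃ rr : ℝ, 0 < rr ∧ ∃ D : 𝒳 → ℝ,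
      Measurable D ∧ (∀ x, 0 ≤ D x) ∧
      (∀ γ ∈ Metric.closedBall γ₀ rr ∩ Γs, ∀ x, ‖ψ γ x - ψ γ₀ x‖ ≤ D x) ∧
      Integrable (fun ω => D (X 0 ω)) P ∧ (∫ ω, D (X 0 ω) ∂P) < δ/8 := by
    intro γ₀ hγ₀
    have hk : ∀ k : ℕ, ∃ D : 𝒳 → ℝ, Measurable D ∧ (∀ x, 0 ≤ D x) ∧ (∀ x, D x ≤ 2 * M x) ∧
        (∀ γ ∈ Metric.closedBall γ₀ (1/(k+1)) ∩ Γs, ∀ x, ‖ψ γ x - ψ γ₀ x‖ ≤ D x) ∧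
        (∀ x η, (∀ γ ∈ Metric.closedBall γ₀ (1/(k+1)) ∩ Γs, ‖ψ γ x - ψ γ₀ x‖ ≤ η) → D x ≤ η) :=
      fun k => osc_exists Γs ψ hcont hmeas M hdom γ₀ hγ₀ _ (by positivity)
    choose D hDmeas hD0 hDM hDbd hDη using hk
    have hDint : ∀ k, Integrable (fun ω => D k (X 0 ω)) P := by
      intro k
      refine (hMint.const_mul 2).mono' (((hDmeas k).comp (hXmeas 0)).aestronglyMeasurable) ?_
      exact Filter.Eventually.of_forall fun ω => by
        rw [Real.norm_eq_abs, abs_of_nonneg (hD0 k _)]; exact hDM k _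
    have hDctend : ∀ x, Tendsto (fun k => D k x) atTop (𝓝 0) := by
      intro x
      rw [Metric.tendsto_atTop]
      intro η hη
      obtain ⟨ρ, hρpos, hρ'⟩ := Metric.continuousWithinAt_iff.mp (hcont x γ₀ hγ₀) (η/2)
        (by linarith)
      obtain ⟨N, hN⟩ := exists_nat_gt (1/ρ)
      refine ⟨N, fun k hk => ?_⟩
      have hk1 : (1:ℝ)/ρ < (k:ℝ)+1 := by
        refine hN.trans_le ?_
        have : (N:ℝ) ≤ (k:ℝ) := by exact_mod_cast hk
        linarith
      have h1 : (1:ℝ)/((k:ℝ)+1) < ρ := by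
        rw [div_lt_iff₀ (by positivity)]
        rw [div_lt_iff₀ hρpos] at hk1
        nlinarith
      have hb : D k x ≤ η/2 := by
        refine hDη k x (η/2) (fun γ hγ => le_of_lt ?_)
        have hd : dist γ γ₀ < ρ := lt_of_le_of_lt (Metric.mem_closedBall.mp hγ.1) h1
        have := hρ' hγ.2 hd
        rwa [dist_eq_norm] at this
      have : dist (D k x) 0 = D k x := by
        rw [Real.dist_eq, sub_zero, abs_of_nonneg (hD0 k x)]
      rw [this]; linarith
    have htend : Tendsto (fun k => ∫ ω, D k (X 0 ω) ∂P) atTop (𝓝 0) := by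
      have := tendsto_integral_of_dominated_convergence (μ := P)
        (F := fun k ω => D k (X 0 ω)) (f := fun _ => (0:ℝ)) (bound := fun ω => 2 * M (X 0 ω))
        (fun k => ((hDmeas k).comp (hXmeas 0)).aestronglyMeasurable)
        (hMint.const_mul 2)
        (fun k => Filter.Eventually.of_forall fun ω => by
          rw [Real.norm_eq_abs, abs_of_nonneg (hD0 k _)]; exact hDM k _)
        (Filter.Eventually.of_forall fun ω => hDctend _)
      simpa using this
    obtain ⟨k, hk⟩ := (htend.eventually (gt_mem_nhds h8)).exists
    exact ⟨1/(k+1), by positivity, D k, hDmeas k, hD0 k, hDbd k, hDint k, hk⟩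
  choose! r hrpos D hDmeas hD0 hDbd hDint hDsmall using hosc
  obtain ⟨t, htΓ, hcover⟩ := hΓ.elim_nhds_subcover (fun γ₀ => Metric.ball γ₀ (r γ₀))
    (fun γ₀ hγ₀ => Metric.ball_mem_nhds _ (hrpos γ₀ hγ₀))
  -- empirical averages
  set Ψ : EuclideanSpace ℝ (Fin d) → ℕ → Ω → EuclideanSpace ℝ (Fin d) :=
    fun γ n ω => (n:ℝ)⁻¹ • ∑ i ∈ Finset.range n, ψ γ (X i ω) with hΨdef
  set A : EuclideanSpace ℝ (Fin d) → ℕ → Ω → ℝ :=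
    fun j n ω => (n:ℝ)⁻¹ • ∑ i ∈ Finset.range n, D j (X i ω) with hAdef
  set c : EuclideanSpace ℝ (Fin d) → ℝ := fun j => ∫ ω, D j (X 0 ω) ∂P with hcdef
  have hΨmeas : ∀ γ n, Measurable (Ψ γ n) := by
    intro γ n
    have : Measurable fun ω => ∑ i ∈ Finset.range n, ψ γ (X i ω) :=
      Finset.measurable_sum _ (fun i _ => (hmeas γ).comp (hXmeas i))
    exact this.const_smul ((n:ℝ)⁻¹)
  have hAmeas : ∀ j ∈ Γs, ∀ n, Measurable (A j n) := by
    intro j hj n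
    have : Measurable fun ω => ∑ i ∈ Finset.range n, D j (X i ω) :=
      Finset.measurable_sum _ (fun i _ => (hDmeas j hj).comp (hXmeas i))
    exact this.const_smul ((n:ℝ)⁻¹)
  -- strong laws
  have hslln1 : ∀ j ∈ Γs, ∀ᵐ ω ∂P, Tendsto (fun n => Ψ j n ω) atTop (𝓝 (g j)) := by
    intro j hj
    have := strong_law_ae (μ := P) (X := fun i => (ψ j) ∘ (X i)) (hψint j hj)
      (fun a b hab => (hindep.comp (fun _ => ψ j) (fun _ => hmeas j)).indepFun hab)
      (fun i => (hident i).comp (hmeas j))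
    exact this
  have hslln2 : ∀ j ∈ Γs, ∀ᵐ ω ∂P, Tendsto (fun n => A j n ω) atTop (𝓝 (c j)) := by
    intro j hj
    have := strong_law_ae (μ := P) (X := fun i => (D j) ∘ (X i)) (hDint j hj)
      (fun a b hab => (hindep.comp (fun _ => D j) (fun _ => hDmeas j hj)).indepFun hab)
      (fun i => (hident i).comp (hDmeas j hj))
    exact this
  have hTIM1 : ∀ j ∈ Γs, Tendsto (fun n => P {ω | δ/8 ≤ ‖Ψ j n ω - g j‖}) atTop (𝓝 0) := by
    intro j hj
    have := tendstoInMeasure_of_tendsto_ae (μ := P) (f := fun n => Ψ j n) (g := fun _ => g j)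
      (fun n => (hΨmeas j n).aestronglyMeasurable) (hslln1 j hj)
    have := tendstoInMeasure_iff_dist.mp this (δ/8) h8
    simpa [dist_eq_norm] using this
  have hTIM2 : ∀ j ∈ Γs, Tendsto (fun n => P {ω | δ/8 ≤ dist (A j n ω) (c j)}) atTop (𝓝 0) := by
    intro j hj
    have := tendstoInMeasure_of_tendsto_ae (μ := P) (f := fun n => A j n) (g := fun _ => c j)
      (fun n => (hAmeas j hj n).aestronglyMeasurable) (hslln2 j hj)
    exact tendstoInMeasure_iff_dist.mp this (δ/8) h8
  -- bad events
  set B1 : ℕ → Set Ω := fun n =>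
    {ω | δ/2 ≤ ‖((n : ℝ))⁻¹ • (∑ i ∈ Finset.range n, ψ (γhat n ω) (X i ω))‖} with hB1def
  set B2 : EuclideanSpace ℝ (Fin d) → ℕ → Set Ω := fun j n =>
    {ω | δ/8 ≤ ‖Ψ j n ω - g j‖} with hB2def
  set B3 : EuclideanSpace ℝ (Fin d) → ℕ → Set Ω := fun j n =>
    {ω | δ/8 ≤ dist (A j n ω) (c j)} with hB3def
  -- inclusion of the bad event
  have hincl : ∀ n, {ω | ε ≤ Metric.infDist (γhat n ω) Γstar} ⊆
      B1 n ∪ ⋃ j ∈ t, (B2 j n ∪ B3 j n) := by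
    intro n ω hω
    by_contra hcon
    simp only [Set.mem_union, Set.mem_iUnion, not_or, not_exists] at hcon
    obtain ⟨h1, h23⟩ := hcon
    have hγK : γhat n ω ∈ K := hmemK n ω hω
    obtain ⟨j, hjt, hjball⟩ := Set.mem_iUnion₂.mp (hcover (hγhatmem n ω))
    have hjΓ : j ∈ Γs := htΓ j hjt
    have h2j := (h23 j hjt).1
    have h3j := (h23 j hjt).2
    simp only [hB2def, Set.mem_setOf_eq, not_le] at h2j
    simp only [hB3def, Set.mem_setOf_eq, not_le] at h3j
    simp only [hB1def, Set.mem_setOf_eq, not_le] at h1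
    set γ := γhat n ω with hγdef
    have hγΓ : γ ∈ Γs := hγhatmem n ω
    have hγball : γ ∈ Metric.closedBall j (r j) ∩ Γs :=
      ⟨Metric.ball_subset_closedBall hjball, hγΓ⟩
    -- ‖g γ - g j‖ ≤ c j
    have hgb : ‖g γ - g j‖ ≤ c j := by
      have hsub : g γ - g j = ∫ ω', (ψ γ (X 0 ω') - ψ j (X 0 ω')) ∂P :=
        (integral_sub (hψint γ hγΓ) (hψint j hjΓ)).symm
      rw [hsub]
      refine (norm_integral_le_integral_norm _).trans ?_
      refine integral_mono ((hψint γ hγΓ).sub (hψint j hjΓ)).norm (hDint j hjΓ) ?_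
      intro ω'
      exact hDbd j hjΓ γ hγball (X 0 ω')
    have hcs : c j < δ/8 := hDsmall j hjΓ
    -- ‖Ψ γ n ω - Ψ j n ω‖ ≤ A j n ω
    have hΨb : ‖Ψ γ n ω - Ψ j n ω‖ ≤ A j n ω := by
      have hsub : Ψ γ n ω - Ψ j n ω
          = (n:ℝ)⁻¹ • ∑ i ∈ Finset.range n, (ψ γ (X i ω) - ψ j (X i ω)) := by
        simp [hΨdef, Finset.sum_sub_distrib, smul_sub]
      rw [hsub, hAdef]
      rw [norm_smul]
      simp only [smul_eq_mul, Real.norm_eq_abs]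
      rw [abs_of_nonneg (by positivity : (0:ℝ) ≤ (n:ℝ)⁻¹)]
      refine mul_le_mul_of_nonneg_left ?_ (by positivity)
      refine (norm_sum_le _ _).trans ?_
      exact Finset.sum_le_sum fun i _ => hDbd j hjΓ γ hγball (X i ω)
    have hA : A j n ω < δ/4 := by
      rw [Real.dist_eq, abs_sub_lt_iff] at h3j
      linarith [h3j.1]
    have hδle : δ ≤ ‖g γ‖ := isMinOn_iff.mp hγmmin γ hγK
    have hchain : ‖g γ‖ ≤ ‖g γ - g j‖ + (‖g j - Ψ j n ω‖ + (‖Ψ j n ω - Ψ γ n ω‖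
        + ‖Ψ γ n ω‖)) := by
      have e : g γ = (g γ - g j) + ((g j - Ψ j n ω) + ((Ψ j n ω - Ψ γ n ω) + Ψ γ n ω)) := by
        abel
      calc ‖g γ‖ = ‖(g γ - g j) + ((g j - Ψ j n ω) + ((Ψ j n ω - Ψ γ n ω) + Ψ γ n ω))‖ := by
            rw [← e]
        _ ≤ ‖g γ - g j‖ + (‖g j - Ψ j n ω‖ + (‖Ψ j n ω - Ψ γ n ω‖ + ‖Ψ γ n ω‖)) := by
            refine (norm_add_le _ _).trans ?_
            refine add_le_add_right ((norm_add_le _ _).trans ?_) _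
            exact add_le_add_right (norm_add_le _ _) _
    have he1 : ‖g j - Ψ j n ω‖ = ‖Ψ j n ω - g j‖ := norm_sub_rev _ _
    have he2 : ‖Ψ j n ω - Ψ γ n ω‖ = ‖Ψ γ n ω - Ψ j n ω‖ := norm_sub_rev _ _
    have hΨγ : ‖Ψ γ n ω‖ < δ/2 := h1
    rw [he1, he2] at hchain
    linarith
  -- assemble the convergence
  have hub : ∀ n, P {ω | ε ≤ Metric.infDist (γhat n ω) Γstar}
      ≤ P (B1 n) + ∑ j ∈ t, (P (B2 j n) + P (B3 j n)) := by
    intro n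
    refine (measure_mono (hincl n)).trans ?_
    refine (measure_union_le _ _).trans ?_
    refine add_le_add_right ?_ _
    refine (measure_biUnion_finset_le t _).trans ?_
    exact Finset.sum_le_sum fun j _ => measure_union_le _ _
  have hlim : Tendsto (fun n => P (B1 n) + ∑ j ∈ t, (P (B2 j n) + P (B3 j n)))
      atTop (𝓝 0) := by
    have hten : Tendsto (fun n => ∑ j ∈ t, (P (B2 j n) + P (B3 j n))) atTop
        (𝓝 (∑ j ∈ t, (0:ENNReal))) := by
      refine tendsto_finset_sum t fun j hj => ?_
      have := (hTIM1 j (htΓ j hj)).add (hTIM2 j (htΓ j hj))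
      simpa using this
    simp only [Finset.sum_const_zero] at hten
    have := (happrox (δ/2) h2).add hten
    simpa using this
  refine tendsto_of_tendsto_of_tendsto_of_le_of_le tendsto_const_nhds hlim
    (fun n => zero_le) hub
end
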